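/- Let ρ be a radially symmetric probability measure on ℝ^d with radial law μ on (0,∞). Suppose γ̃ minimizes ∫ h dγ over measures γ on (0,∞)^N with all marginals μ, where h(r_1,...,r_N) = inf_{|x_i|=r_i} Σ_{i≠j} 1/|x_i−x_j|, and suppose there exist u_1,...,u_N : (0,∞) → ℝ with h(r_1,...,r_N) ≥ Σ_i u_i(r_i) everywhere and equality on spt(γ̃). Then any measure ρ_N ∈ Π(ρ) concentrated on points (x_1,...,x_N) attaining the infimum in h with (|x_1|,...,|x_N|) ∈ spt(γ̃) minimizes ∫ Σ_{i≠j} 1/|x_i−x_j| dρ_N over Π(ρ), and E_N[ρ] equals the minimum of the reduced one-dimensional problem. -/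

import Mathlib

open MeasureTheory ENNReal

/-- The Coulomb cost `∑_{i ≠ j} 1/|x_i - x_j|`, valued in `[0,∞]`. -/
noncomputable def coul (d N : ℕ) (x : Fin N → EuclideanSpace ℝ (Fin d)) : ℝ≥0∞ :=
  ∑ i : Fin N, ∑ j : Fin N, if i ≠ j then (ENNReal.ofReal ‖x i - x j‖)⁻¹ else 0

/-- The reduced radial cost `h(r_1,…,r_N) = inf { c(x_1,…,x_N) : |x_i| = r_i }`. -/
noncomputable def hcost (d N : ℕ) (r : Fin N → ℝ) : ℝ≥0∞ :=
  ⨅ x ∈ {x : Fin N → EuclideanSpace ℝ (Fin d) | ∀ i, ‖x i‖ = r i}, coul d N x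

/-- The support of a measure: points all of whose open neighbourhoods have positive mass. -/
def spt {α : Type*} [TopologicalSpace α] [MeasurableSpace α]
    (γ : Measure α) : Set α :=
  {z | ∀ U : Set α, IsOpen U → z ∈ U → γ U ≠ 0}

lemma ae_mem_spt {α : Type*} [TopologicalSpace α] [MeasurableSpace α]
    [SecondCountableTopology α]
    (γ : Measure α) : ∀ᵐ z ∂γ, z ∈ spt γ := by
  rw [MeasureTheory.ae_iff]
  have hset : {z | ¬ z ∈ spt γ} = ⋃₀ {U : Set α | IsOpen U ∧ γ U = 0} := by
    ext z
    simp only [spt, Set.mem_setOf_eq, Set.mem_sUnion, not_forall]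
    constructor
    · rintro ⟨U, hU, hz, h0⟩
      exact ⟨U, ⟨hU, by simpa using h0⟩, hz⟩
    · rintro ⟨U, ⟨hU, h0⟩, hz⟩
      exact ⟨U, hU, hz, by simpa using h0⟩
  rw [hset]
  obtain ⟨T, hTc, hTsub, hTeq⟩ :=
    TopologicalSpace.isOpen_sUnion_countable {U : Set α | IsOpen U ∧ γ U = 0}
      (fun U hU => hU.1)
  rw [← hTeq]
  exact (measure_sUnion_null_iff hTc).mpr (fun U hU => (hTsub hU).2)

lemma hcost_le_coul (d N : ℕ) (x : Fin N → EuclideanSpace ℝ (Fin d)) :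
    hcost d N (fun i => ‖x i‖) ≤ coul d N x := by
  exact iInf₂_le x (fun i => rfl)

/-- For a radially symmetric marginal `ρ`, a measure `ρ_N ∈ Π(ρ)` concentrated on
configurations attaining the infimum defining `h` and with radii in the support of an
optimizer `γ̃` of the reduced one-dimensional problem (with dual potentials `u_i`)
minimizes the Coulomb cost over `Π(ρ)`, and `E_N[ρ]` equals the reduced minimum. -/
theorem stmt11 (d N : ℕ) (hd : 2 ≤ d) (hN : 2 ≤ N)
    (ρ : Measure (EuclideanSpace ℝ (Fin d))) [IsProbabilityMeasure ρ]
    (hradial : ∀ A : EuclideanSpace ℝ (Fin d) ≃ₗᵢ[ℝ] EuclideanSpace ℝ (Fin d),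
      ρ.map A = ρ)
    (μ : Measure ℝ) (hμ : μ = ρ.map (fun x => ‖x‖))
    (γt : Measure (Fin N → ℝ)) [IsProbabilityMeasure γt]
    (hγmarg : ∀ i : Fin N, γt.map (fun r => r i) = μ)
    (hγopt : ∀ γ : Measure (Fin N → ℝ), IsProbabilityMeasure γ →
      (∀ i : Fin N, γ.map (fun r => r i) = μ) →
      ∫⁻ r, hcost d N r ∂γt ≤ ∫⁻ r, hcost d N r ∂γ)
    (u : Fin N → ℝ → ℝ) (hu : ∀ i, Integrable (u i) μ)
    (hlb : ∀ r : Fin N → ℝ, (∀ i, 0 < r i) →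
      ((∑ i : Fin N, u i (r i) : ℝ) : EReal) ≤ (hcost d N r).toEReal)
    (heq : ∀ r ∈ spt γt,
      (hcost d N r).toEReal = ((∑ i : Fin N, u i (r i) : ℝ) : EReal))
    (ρN : Measure (Fin N → EuclideanSpace ℝ (Fin d))) [IsProbabilityMeasure ρN]
    (hρNmarg : ∀ i : Fin N, ρN.map (fun x => x i) = ρ)
    (hconc : ∀ᵐ x ∂ρN, coul d N x = hcost d N (fun i => ‖x i‖) ∧
      (fun i => ‖x i‖) ∈ spt γt) :
    (∀ γ : Measure (Fin N → EuclideanSpace ℝ (Fin d)), IsProbabilityMeasure γ →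
      (∀ i : Fin N, γ.map (fun x => x i) = ρ) →
      ∫⁻ x, coul d N x ∂ρN ≤ ∫⁻ x, coul d N x ∂γ) ∧
    ∫⁻ x, coul d N x ∂ρN = ∫⁻ r, hcost d N r ∂γt := by
  -- key consequence of heq : on spt γt, hcost = ofReal of the sum, and sum nonneg
  have key : ∀ r ∈ spt γt, 0 ≤ (∑ i : Fin N, u i (r i) : ℝ) ∧
      hcost d N r = ENNReal.ofReal (∑ i : Fin N, u i (r i)) := by
    intro r hr
    have h := (heq r hr).symm
    have hnn : (0 : EReal) ≤ ((∑ i : Fin N, u i (r i) : ℝ) : EReal) := by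
      rw [h]; exact EReal.coe_ennreal_nonneg _
    have hnn' : (0:ℝ) ≤ (∑ i : Fin N, u i (r i) : ℝ) := by exact_mod_cast hnn
    refine ⟨hnn', ?_⟩
    apply EReal.coe_ennreal_injective
    rw [← h, EReal.coe_ennreal_ofReal, max_eq_left hnn']
  -- the value S
  set S : ℝ := ∑ i : Fin N, ∫ t, u i t ∂μ with hS
  -- measurability of the norms map
  have hnorm_meas : Measurable
      (fun x : Fin N → EuclideanSpace ℝ (Fin d) => fun i => ‖x i‖) :=
    measurable_pi_lambda _ (fun i => (measurable_pi_apply i).norm)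
  -- marginal of ρN under ‖x i‖ is μ
  have hρNnorm : ∀ i : Fin N, ρN.map (fun x => ‖x (i : Fin N)‖) = μ := by
    intro i
    rw [hμ, ← hρNmarg i,
      Measure.map_map (g := fun y : EuclideanSpace ℝ (Fin d) => ‖y‖)
        measurable_norm (measurable_pi_apply i)]
    rfl
  -- integrability of u i (‖x i‖) wrt ρN, and its integral
  have hIntρ : ∀ i : Fin N, Integrable (fun x : Fin N → EuclideanSpace ℝ (Fin d) =>
      u i (‖x i‖)) ρN := by
    intro i
    have := (hu i)
    rw [← hρNnorm i] at this
    exact (integrable_map_measure this.aestronglyMeasurable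
      ((measurable_pi_apply i).norm.aemeasurable)).mp this
  have hIntρ_val : ∀ i : Fin N, ∫ x, u i (‖x i‖) ∂ρN = ∫ t, u i t ∂μ := by
    intro i
    rw [← hρNnorm i, integral_map ((measurable_pi_apply i).norm.aemeasurable)
      (by rw [hρNnorm i]; exact (hu i).aestronglyMeasurable)]
  have hIntγ : ∀ i : Fin N, Integrable (fun r : Fin N → ℝ => u i (r i)) γt := by
    intro i
    have := (hu i)
    rw [← hγmarg i] at this
    exact (integrable_map_measure this.aestronglyMeasurable
      ((measurable_pi_apply i).aemeasurable)).mp this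
  have hIntγ_val : ∀ i : Fin N, ∫ r, u i (r i) ∂γt = ∫ t, u i t ∂μ := by
    intro i
    rw [← hγmarg i, integral_map ((measurable_pi_apply i).aemeasurable)
      (by rw [hγmarg i]; exact (hu i).aestronglyMeasurable)]
  -- ∫⁻ coul dρN = ofReal S
  have hρNval : ∫⁻ x, coul d N x ∂ρN = ENNReal.ofReal S := by
    have hae : ∀ᵐ x ∂ρN,
        coul d N x = ENNReal.ofReal (∑ i : Fin N, u i (‖x i‖)) := by
      filter_upwards [hconc] with x ⟨h1, h2⟩
      rw [h1, (key _ h2).2]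
    rw [lintegral_congr_ae hae]
    have hint : Integrable (fun x : Fin N → EuclideanSpace ℝ (Fin d) =>
        ∑ i : Fin N, u i (‖x i‖)) ρN := integrable_finset_sum _ (fun i _ => hIntρ i)
    have hnn : 0 ≤ᵐ[ρN] (fun x : Fin N → EuclideanSpace ℝ (Fin d) =>
        ∑ i : Fin N, u i (‖x i‖)) := by
      filter_upwards [hconc] with x ⟨h1, h2⟩
      exact (key _ h2).1
    rw [← ofReal_integral_eq_lintegral_ofReal hint hnn,
      integral_finset_sum _ (fun i _ => hIntρ i)]
    congr 1
    exact Finset.sum_congr rfl (fun i _ => hIntρ_val i)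
  -- ∫⁻ hcost dγt = ofReal S
  have hγtval : ∫⁻ r, hcost d N r ∂γt = ENNReal.ofReal S := by
    have hae : ∀ᵐ r ∂γt,
        hcost d N r = ENNReal.ofReal (∑ i : Fin N, u i (r i)) := by
      filter_upwards [ae_mem_spt γt] with r hr
      exact (key _ hr).2
    rw [lintegral_congr_ae hae]
    have hint : Integrable (fun r : Fin N → ℝ =>
        ∑ i : Fin N, u i (r i)) γt := integrable_finset_sum _ (fun i _ => hIntγ i)
    have hnn : 0 ≤ᵐ[γt] (fun r : Fin N → ℝ => ∑ i : Fin N, u i (r i)) := by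
      filter_upwards [ae_mem_spt γt] with r hr
      exact (key _ hr).1
    rw [← ofReal_integral_eq_lintegral_ofReal hint hnn,
      integral_finset_sum _ (fun i _ => hIntγ i)]
    congr 1
    exact Finset.sum_congr rfl (fun i _ => hIntγ_val i)
  have hmain : ∫⁻ x, coul d N x ∂ρN = ∫⁻ r, hcost d N r ∂γt := by
    rw [hρNval, hγtval]
  refine ⟨?_, hmain⟩
  intro γ hγprob hγm
  rw [hmain]
  -- push forward γ under norms
  set ν : Measure (Fin N → ℝ) := γ.map (fun x => fun i => ‖x i‖) with hν
  have hνprob : IsProbabilityMeasure ν := Measure.isProbabilityMeasure_map hnorm_meas.aemeasurable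
  have hνmarg : ∀ i : Fin N, ν.map (fun r => r i) = μ := by
    intro i
    rw [hν, Measure.map_map (measurable_pi_apply i) hnorm_meas, hμ, ← hγm i,
      Measure.map_map (g := fun y : EuclideanSpace ℝ (Fin d) => ‖y‖)
        measurable_norm (measurable_pi_apply i)]
    rfl
  calc ∫⁻ r, hcost d N r ∂γt ≤ ∫⁻ r, hcost d N r ∂ν := hγopt ν hνprob hνmarg
    _ ≤ ∫⁻ x, hcost d N (fun i => ‖x i‖) ∂γ := lintegral_map_le _ _
    _ ≤ ∫⁻ x, coul d N x ∂γ := lintegral_mono (fun x => hcost_le_coul d N x)
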